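/- Let a : S → S' be a monotone endpoint-preserving (active) map of finite linear orders and s : S → S'' a surjective active monotone map. Then there exists a pushout of a along s in the category of finite linear orders with active monotone maps, computed by contracting in S' all segments lying in the image of segments contracted by s. -/

import Mathlib

/-- A monotone map between finite linear orders is active if it preserves the bottom and
the top element. -/
def ActiveMap {n m : ℕ} (f : Fin (n + 1) →o Fin (m + 1)) : Prop :=
  f 0 = 0 ∧ f (Fin.last n) = Fin.last m

open scoped Classical

section Aux
variable {n n' n'' : ℕ}
  (a : Fin (n + 1) →o Fin (n' + 1)) (s : Fin (n + 1) →o Fin (n'' + 1))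

/-- Step `i → i+1` in `Fin (n'+1)` is collapsed. -/
def Col (i : ℕ) : Prop :=
  ∃ j k : Fin (n + 1), s j = s k ∧ (a j : ℕ) ≤ i ∧ i + 1 ≤ (a k : ℕ)

/-- Number of surviving steps below `m`. -/
noncomputable def cnt (m : ℕ) : ℕ :=
  ((Finset.range n').filter (fun i => i < m ∧ ¬ Col a s i)).card

lemma cnt_zero : cnt a s 0 = 0 := by
  simp [cnt]

lemma cnt_mono {x y : ℕ} (h : x ≤ y) : cnt a s x ≤ cnt a s y := by
  apply Finset.card_le_card
  intro i hi
  simp only [Finset.mem_filter, Finset.mem_range] at hi ⊢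
  exact ⟨hi.1, lt_of_lt_of_le hi.2.1 h, hi.2.2⟩

lemma cnt_le (m : ℕ) : cnt a s m ≤ cnt a s n' := by
  apply Finset.card_le_card
  intro i hi
  simp only [Finset.mem_filter, Finset.mem_range] at hi ⊢
  exact ⟨hi.1, hi.1, hi.2.2⟩

lemma cnt_succ_of_col {m : ℕ} (hc : Col a s m) :
    cnt a s (m + 1) = cnt a s m := by
  unfold cnt
  congr 1
  apply Finset.filter_congr
  intro i hi
  simp only [Finset.mem_range] at hi
  constructor
  · rintro ⟨h1, h2⟩
    rcases Nat.lt_succ_iff_lt_or_eq.mp h1 with h | h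
    · exact ⟨h, h2⟩
    · exact absurd (h ▸ hc) h2
  · rintro ⟨h1, h2⟩
    exact ⟨Nat.lt_succ_of_lt h1, h2⟩

lemma cnt_succ_of_ge {m : ℕ} (hm : n' ≤ m) :
    cnt a s (m + 1) = cnt a s m := by
  unfold cnt
  congr 1
  apply Finset.filter_congr
  intro i hi
  simp only [Finset.mem_range] at hi
  constructor
  · rintro ⟨_, h2⟩; exact ⟨lt_of_lt_of_le hi hm, h2⟩
  · rintro ⟨h1, h2⟩; exact ⟨Nat.lt_succ_of_lt h1, h2⟩

lemma cnt_succ_of_ncol {m : ℕ} (hm : m < n') (hc : ¬ Col a s m) :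
    cnt a s (m + 1) = cnt a s m + 1 := by
  unfold cnt
  have : (Finset.range n').filter (fun i => i < m + 1 ∧ ¬ Col a s i)
      = insert m ((Finset.range n').filter (fun i => i < m ∧ ¬ Col a s i)) := by
    ext i
    simp only [Finset.mem_insert, Finset.mem_filter, Finset.mem_range]
    constructor
    · rintro ⟨h1, h2, h3⟩
      rcases Nat.lt_succ_iff_lt_or_eq.mp h2 with h | h
      · exact Or.inr ⟨h1, h, h3⟩
      · exact Or.inl h
    · rintro (rfl | ⟨h1, h2, h3⟩)
      · exact ⟨hm, Nat.lt_succ_self _, hc⟩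
      · exact ⟨h1, Nat.lt_succ_of_lt h2, h3⟩
  rw [this, Finset.card_insert_of_notMem]
  simp

lemma cnt_succ_le (m : ℕ) : cnt a s (m + 1) ≤ cnt a s m + 1 := by
  by_cases hm : m < n'
  · by_cases hc : Col a s m
    · rw [cnt_succ_of_col a s hc]; omega
    · rw [cnt_succ_of_ncol a s hm hc]
  · rw [cnt_succ_of_ge a s (le_of_not_gt hm)]; omega

lemma cnt_eq_of_all_col {x y : ℕ} (hxy : x ≤ y)
    (H : ∀ i, x ≤ i → i < y → Col a s i) : cnt a s x = cnt a s y := by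
  induction y, hxy using Nat.le_induction with
  | base => rfl
  | succ m hm ih =>
    rw [show cnt a s (m+1) = cnt a s m from ?_]
    · exact ih (fun i h1 h2 => H i h1 (Nat.lt_succ_of_lt h2))
    · by_cases hmn : m < n'
      · exact cnt_succ_of_col a s (H m hm (Nat.lt_succ_self m))
      · exact cnt_succ_of_ge a s (le_of_not_gt hmn)

lemma col_of_cnt_eq {x y : ℕ} (h : cnt a s x = cnt a s y)
    {i : ℕ} (h1 : x ≤ i) (h2 : i < y) (h3 : i < n') : Col a s i := by
  by_contra hc
  have e1 : cnt a s x ≤ cnt a s i := cnt_mono a s h1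
  have e2 : cnt a s (i + 1) ≤ cnt a s y := cnt_mono a s h2
  have := cnt_succ_of_ncol a s h3 hc
  omega

lemma cnt_surj (y : ℕ) : ∀ m ≤ cnt a s y, ∃ x ≤ y, cnt a s x = m := by
  induction y with
  | zero =>
    intro m hm
    rw [cnt_zero] at hm
    exact ⟨0, le_refl 0, by rw [cnt_zero]; omega⟩
  | succ y ih =>
    intro m hm
    by_cases h : m ≤ cnt a s y
    · obtain ⟨x, hx, he⟩ := ih m h
      exact ⟨x, Nat.le_succ_of_le hx, he⟩
    · refine ⟨y + 1, le_refl _, ?_⟩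
      have := cnt_succ_le a s y
      omega

end Aux

/-- Let `a : S → S'` be an active monotone map of finite linear orders and let
`s : S → S''` be a surjective active monotone map. Then the pushout of `a` along `s`
exists in the category of finite linear orders and active monotone maps: there are
active maps `p : S' → S₀` (surjective, parallel to `s`) and `b : S'' → S₀` with
`p ∘ a = b ∘ s`, satisfying the universal property of the pushout. -/
theorem active_pushout (n n' n'' : ℕ)
    (a : Fin (n + 1) →o Fin (n' + 1)) (s : Fin (n + 1) →o Fin (n'' + 1))
    (ha : ActiveMap a) (hs : ActiveMap s) (hsurj : Function.Surjective s) :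
    ∃ (k : ℕ) (p : Fin (n' + 1) →o Fin (k + 1)) (b : Fin (n'' + 1) →o Fin (k + 1)),
      ActiveMap p ∧ ActiveMap b ∧ Function.Surjective p ∧
      p.comp a = b.comp s ∧
      ∀ (l : ℕ) (f : Fin (n' + 1) →o Fin (l + 1)) (g : Fin (n'' + 1) →o Fin (l + 1)),
        ActiveMap f → ActiveMap g → f.comp a = g.comp s →
        ∃! h : Fin (k + 1) →o Fin (l + 1),
          ActiveMap h ∧ h.comp p = f ∧ h.comp b = g := by
  classical
  set k := cnt a s n' with hk
  have hlt : ∀ m : ℕ, cnt a s m < k + 1 := fun m => Nat.lt_succ_of_le (cnt_le a s m)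
  set p : Fin (n' + 1) →o Fin (k + 1) :=
    ⟨fun x => ⟨cnt a s (x : ℕ), hlt _⟩,
     fun x y hxy => by simpa [Fin.le_def] using cnt_mono a s (Fin.le_def.mp hxy)⟩ with hpdef
  have hpval : ∀ x : Fin (n' + 1), (p x : ℕ) = cnt a s (x : ℕ) := fun x => rfl
  have hpact : ActiveMap p := by
    constructor
    · exact Fin.ext (by simp [hpval, cnt_zero])
    · exact Fin.ext (by simp [hpval, Fin.last]; rfl)
  -- collapse key lemma
  have key1 : ∀ j j' : Fin (n + 1), j ≤ j' → s j = s j' → p (a j) = p (a j') := by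
    intro j j' hjj' hss
    apply Fin.ext
    rw [hpval, hpval]
    apply cnt_eq_of_all_col a s (by exact_mod_cast a.monotone hjj')
    intro i h1 h2
    exact ⟨j, j', hss, h1, h2⟩
  have key : ∀ j j' : Fin (n + 1), s j = s j' → p (a j) = p (a j') := by
    intro j j' hss
    rcases le_total j j' with h | h
    · exact key1 j j' h hss
    · exact (key1 j' j h hss.symm).symm
  -- section of s
  set r : Fin (n'' + 1) → Fin (n + 1) := fun z => (hsurj z).choose with hrdef
  have hr : ∀ z, s (r z) = z := fun z => (hsurj z).choose_spec
  have bmono : Monotone (fun z => p (a (r z))) := by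
    intro z z' hzz'
    rcases eq_or_lt_of_le hzz' with rfl | hlt'
    · exact le_refl _
    · have hrr : r z ≤ r z' := by
        by_contra hcon
        push_neg at hcon
        have := s.monotone hcon.le
        rw [hr, hr] at this
        exact absurd hlt' (not_lt.mpr this)
      exact p.monotone (a.monotone hrr)
  set b : Fin (n'' + 1) →o Fin (k + 1) := ⟨fun z => p (a (r z)), bmono⟩ with hbdef
  have hbact : ActiveMap b := by
    constructor
    · have h0 : s (r 0) = s 0 := by rw [hr, hs.1]
      show p (a (r 0)) = 0
      rw [key (r 0) 0 h0, ha.1, hpact.1]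
    · have h0 : s (r (Fin.last n'')) = s (Fin.last n) := by rw [hr, hs.2]
      show p (a (r (Fin.last n''))) = Fin.last k
      rw [key _ _ h0, ha.2, hpact.2]
  have hpsurj : Function.Surjective p := by
    intro y
    obtain ⟨x, hx, he⟩ := cnt_surj a s n' (y : ℕ) (by have := y.isLt; omega)
    exact ⟨⟨x, by omega⟩, Fin.ext (by rw [hpval]; exact he)⟩
  have hcomm : p.comp a = b.comp s := by
    ext j
    show ((p (a j)) : ℕ) = ((p (a (r (s j)))) : ℕ)
    rw [key j (r (s j)) (by rw [hr])]
  refine ⟨k, p, b, hpact, hbact, hpsurj, hcomm, ?_⟩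
  intro l f g hf hg hfg
  have hc : ∀ x, f (a x) = g (s x) := fun x => DFunLike.congr_fun hfg x
  -- f is constant on fibers of p
  have fcst : ∀ (x : Fin (n' + 1)) (m : ℕ) (hm : m < n' + 1), (x : ℕ) ≤ m →
      (∀ i, (x : ℕ) ≤ i → i < m → Col a s i) → f x = f ⟨m, hm⟩ := by
    intro x m
    induction m with
    | zero =>
      intro hm hx _
      congr 1
      exact Fin.ext (by simp only [Fin.val_mk]; omega)
    | succ m ih =>
      intro hm hx H
      rcases Nat.lt_succ_iff_lt_or_eq.mp (Nat.lt_succ_of_le hx) with hlt' | heq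
      · have hxm : (x : ℕ) ≤ m := by omega
        have h1 : f x = f ⟨m, by omega⟩ :=
          ih (by omega) hxm (fun i hi1 hi2 => H i hi1 (by omega))
        obtain ⟨j, j', hjj', hji, hij'⟩ := H m hxm (Nat.lt_succ_self m)
        have hfa : f (a j) = f (a j') := by rw [hc, hc, hjj']
        have step : f ⟨m, by omega⟩ = f ⟨m + 1, hm⟩ := by
          apply le_antisymm
          · exact f.monotone (by simp [Fin.le_def])
          · calc f ⟨m + 1, hm⟩ ≤ f (a j') := f.monotone (by simp [Fin.le_def]; omega)
              _ = f (a j) := hfa.symm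
              _ ≤ f ⟨m, by omega⟩ := f.monotone (by simp [Fin.le_def]; omega)
        exact h1.trans step
      · congr 1
        exact Fin.ext (by simp only [Fin.val_mk]; omega)
  have fconst_le : ∀ x y : Fin (n' + 1), x ≤ y → p x = p y → f x = f y := by
    intro x y hxy hpxy
    have hcnt : cnt a s (x : ℕ) = cnt a s (y : ℕ) := by
      have := congrArg (Fin.val) hpxy
      rwa [hpval, hpval] at this
    have := fcst x (y : ℕ) y.isLt (Fin.le_def.mp hxy)
      (fun i h1 h2 => col_of_cnt_eq a s hcnt h1 h2 (by omega))
    simpa using this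
  have fconst : ∀ x y : Fin (n' + 1), p x = p y → f x = f y := by
    intro x y hpxy
    rcases le_total x y with h | h
    · exact fconst_le x y h hpxy
    · exact (fconst_le y x h hpxy.symm).symm
  -- section of p
  set rp : Fin (k + 1) → Fin (n' + 1) := fun y => (hpsurj y).choose with hrpdef
  have hrp : ∀ y, p (rp y) = y := fun y => (hpsurj y).choose_spec
  have hmono : Monotone (fun y => f (rp y)) := by
    intro y y' hyy'
    rcases le_total (rp y) (rp y') with h | h
    · exact f.monotone h
    · have h2 : y' ≤ y := by rw [← hrp y, ← hrp y']; exact p.monotone h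
      have h3 : y = y' := le_antisymm hyy' h2
      rw [h3]
  refine ⟨⟨fun y => f (rp y), hmono⟩, ⟨⟨?_, ?_⟩, ?_, ?_⟩, ?_⟩
  · show f (rp 0) = 0
    rw [fconst (rp 0) 0 (by rw [hrp, hpact.1]), hf.1]
  · show f (rp (Fin.last k)) = Fin.last l
    rw [fconst (rp (Fin.last k)) (Fin.last n') (by rw [hrp, hpact.2]), hf.2]
  · ext x
    show (f (rp (p x)) : ℕ) = (f x : ℕ)
    rw [fconst (rp (p x)) x (hrp (p x))]
  · ext z
    show (f (rp (p (a (r z)))) : ℕ) = (g z : ℕ)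
    rw [fconst _ _ (hrp (p (a (r z)))), hc, hr]
  · rintro h' ⟨_, hp', _⟩
    ext y
    have := DFunLike.congr_fun hp' (rp y)
    show (h' y : ℕ) = (f (rp y) : ℕ)
    rw [← this]
    show (h' y : ℕ) = (h' (p (rp y)) : ℕ)
    rw [hrp]
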